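/- A map f : X → Y between topological spaces is scatteredly continuous if and only if there exists a well-order ≺ on the set X such that for every non-empty subset A ⊆ X the restriction f|A : A → Y (with the subspace topology on A) is continuous at the ≺-least element of A. -/

import Mathlib

open Set Topology

/-- A map `f : X → Y` is *scatteredly continuous* if for every non-empty subset `A ⊆ X`
the restriction `f|A` has a point of continuity. -/
def ScatteredlyContinuous {X Y : Type*} [TopologicalSpace X] [TopologicalSpace Y]
    (f : X → Y) : Prop :=
  ∀ A : Set X, A.Nonempty → ∃ a ∈ A, ContinuousWithinAt f A a

section Aux

open scoped Classical

variable {X : Type u} {Y : Type v} [TopologicalSpace X] [TopologicalSpace Y] {f : X → Y}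

/-- Transfinite enumeration of points of continuity. -/
noncomputable def scGen (hf : ScatteredlyContinuous f) (hX : Nonempty X) :
    Ordinal.{u} → X :=
  WellFounded.fix Ordinal.lt_wf (fun α IH =>
    if h : {x : X | ∀ β (hβ : β < α), IH β hβ ≠ x}.Nonempty then
      (hf _ h).choose
    else hX.some)

/-- The set of points not chosen before stage `α`. -/
def scSet (hf : ScatteredlyContinuous f) (hX : Nonempty X) (α : Ordinal.{u}) : Set X :=
  {x : X | ∀ β, β < α → scGen hf hX β ≠ x}

lemma scGen_eq (hf : ScatteredlyContinuous f) (hX : Nonempty X) (α : Ordinal.{u}) :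
    scGen hf hX α =
      if h : (scSet hf hX α).Nonempty then (hf _ h).choose else hX.some := by
  rw [scGen, WellFounded.fix_eq]
  rfl

lemma scGen_spec (hf : ScatteredlyContinuous f) (hX : Nonempty X) (α : Ordinal.{u})
    (h : (scSet hf hX α).Nonempty) :
    scGen hf hX α ∈ scSet hf hX α ∧
      ContinuousWithinAt f (scSet hf hX α) (scGen hf hX α) := by
  rw [scGen_eq, dif_pos h]
  exact ⟨(hf _ h).choose_spec.1, (hf _ h).choose_spec.2⟩

lemma scGen_surj (hf : ScatteredlyContinuous f) (hX : Nonempty X) (x : X) :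
    ∃ α, scGen hf hX α = x := by
  by_contra hc
  push_neg at hc
  have hne : ∀ α, (scSet hf hX α).Nonempty := fun α => ⟨x, fun β _ => hc β⟩
  have hinj : Function.Injective (scGen hf hX) := by
    intro α β hαβ
    by_contra hne'
    rcases lt_or_gt_of_ne hne' with h | h
    · exact (scGen_spec hf hX β (hne β)).1 α h hαβ
    · exact (scGen_spec hf hX α (hne α)).1 β h hαβ.symm
  exact not_injective_of_ordinal _ hinj

/-- The rank of a point: the first stage at which it is chosen. -/
noncomputable def scRank (hf : ScatteredlyContinuous f) (hX : Nonempty X) (x : X) :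
    Ordinal.{u} :=
  sInf {α | scGen hf hX α = x}

lemma scGen_scRank (hf : ScatteredlyContinuous f) (hX : Nonempty X) (x : X) :
    scGen hf hX (scRank hf hX x) = x :=
  csInf_mem (scGen_surj hf hX x)

lemma scRank_le (hf : ScatteredlyContinuous f) (hX : Nonempty X) {x : X} {α : Ordinal.{u}}
    (h : scGen hf hX α = x) : scRank hf hX x ≤ α :=
  csInf_le' h

lemma scRank_inj (hf : ScatteredlyContinuous f) (hX : Nonempty X) :
    Function.Injective (scRank hf hX) := by
  intro x y h
  rw [← scGen_scRank hf hX x, ← scGen_scRank hf hX y, h]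

end Aux

theorem scatteredlyContinuous_iff_wellOrder
    {X Y : Type*} [TopologicalSpace X] [TopologicalSpace Y] (f : X → Y) :
    ScatteredlyContinuous f ↔
      ∃ r : X → X → Prop, IsWellOrder X r ∧
        ∀ A : Set X, A.Nonempty →
          ∀ a ∈ A, (∀ b ∈ A, ¬ r b a) → ContinuousWithinAt f A a := by
  constructor
  · intro hf
    have hX : Nonempty X ∨ IsEmpty X := by
      rcases isEmpty_or_nonempty X with h | h
      · exact Or.inr h
      · exact Or.inl h
    rcases hX with hX | hX
    · -- nonempty case: use the transfinite construction
      let ρ := scRank hf hX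
      have hinj : Function.Injective ρ := scRank_inj hf hX
      let e : X ↪ Ordinal := ⟨ρ, hinj⟩
      haveI : IsWellOrder X (⇑e ⁻¹'o (· < ·)) := (RelEmbedding.preimage e (· < ·)).isWellOrder
      refine ⟨fun x y => ρ x < ρ y, this, ?_⟩
      intro A hA a ha hmin
      have haS : a ∈ scSet hf hX (ρ a) := by
        intro β hβ hβa
        exact absurd (scRank_le hf hX hβa) (not_le_of_gt hβ)
      have hsub : A ⊆ scSet hf hX (ρ a) := by
        intro b hb β hβ hβb
        exact hmin b hb (lt_of_le_of_lt (scRank_le hf hX hβb) hβ)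
      have hspec := scGen_spec hf hX (ρ a) ⟨a, haS⟩
      have hga : scGen hf hX (ρ a) = a := scGen_scRank hf hX a
      rw [hga] at hspec
      exact hspec.2.mono hsub
    · -- empty case: any well-order works vacuously
      refine ⟨WellOrderingRel, WellOrderingRel.isWellOrder, ?_⟩
      intro A hA a _ _
      exact (hX.false a).elim
  · rintro ⟨r, hwo, h⟩
    intro A hA
    haveI := hwo
    refine ⟨hwo.wf.min A hA, hwo.wf.min_mem A hA, ?_⟩
    exact h A hA _ (hwo.wf.min_mem A hA) (fun b hb => hwo.wf.not_lt_min A hb)
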